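/- Let u, v : ℚ → B(H) be monotone families of orthogonal projections on a complex Hilbert space H (x ≤ y implies ran u(x) ⊆ ran u(y) and ran v(x) ⊆ ran v(y)) such that the union ⋃_{x∈ℚ} ran u(x) is dense in H and ⋃_{x∈ℚ} ran v(x) is dense in H. Then for every ψ ∈ H, [u(x),v(y)]ψ = 0 for all x, y ∈ ℚ if and only if [u(x),v(y)]u(z)ψ = 0 and [u(x),v(y)]v(z)ψ = 0 for all x, y, z ∈ ℚ. -/

import Mathlib

variable {H : Type} [NormedAddCommGroup H] [InnerProductSpace ℂ H] [CompleteSpace H]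

/-- `P` is an orthogonal projection on `H`: self-adjoint and idempotent. -/
def IsOrthProj (P : H →L[ℂ] H) : Prop := IsSelfAdjoint P ∧ P * P = P

/-- For monotone families `u, v : ℚ → B(H)` of orthogonal projections whose unions of ranges
are dense, and any `ψ ∈ H`: `[u(x),v(y)]ψ = 0` for all `x, y` if and only if
`[u(x),v(y)]u(z)ψ = 0` and `[u(x),v(y)]v(z)ψ = 0` for all `x, y, z`. -/
lemma orthProj_fix {P : H →L[ℂ] H} (hP : IsOrthProj P) {w : H}
    (hw : w ∈ LinearMap.range (P : H →ₗ[ℂ] H)) : P w = w := by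
  obtain ⟨x, rfl⟩ := hw
  have := congrArg (fun T : H →L[ℂ] H => T x) hP.2
  simpa [ContinuousLinearMap.mul_apply] using this

lemma orthProj_absorb {P Q : H →L[ℂ] H} (hP : IsOrthProj P) (hQ : IsOrthProj Q)
    (h : LinearMap.range (P : H →ₗ[ℂ] H) ≤ LinearMap.range (Q : H →ₗ[ℂ] H)) :
    Q * P = P ∧ P * Q = P := by
  have h1 : Q * P = P := by
    ext w
    exact orthProj_fix hQ (h ⟨w, rfl⟩)
  refine ⟨h1, ?_⟩
  have h2 := congrArg star h1
  rwa [star_mul, hP.1.star_eq, hQ.1.star_eq] at h2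

lemma orthProj_norm_sub_le {P : H →L[ℂ] H} (hP : IsOrthProj P) (w : H) :
    ‖w - P w‖ ≤ ‖w‖ := by
  have hadj : ContinuousLinearMap.adjoint P = P :=
    ContinuousLinearMap.isSelfAdjoint_iff'.mp hP.1
  have hz : P (w - P w) = 0 := by
    have := congrArg (fun T : H →L[ℂ] H => T w) hP.2
    simp only [ContinuousLinearMap.mul_apply] at this
    simp [map_sub, this]
  have hinner : (inner ℂ (w - P w) (P w) : ℂ) = 0 := by
    rw [← hadj, ContinuousLinearMap.adjoint_inner_right, hadj, hz, inner_zero_left]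
  have hsq : ‖(w - P w) + P w‖ * ‖(w - P w) + P w‖ = ‖w - P w‖ * ‖w - P w‖ + ‖P w‖ * ‖P w‖ :=
    norm_add_sq_eq_norm_sq_add_norm_sq_of_inner_eq_zero _ _ hinner
  rw [sub_add_cancel] at hsq
  nlinarith [norm_nonneg (P w), norm_nonneg (w - P w), norm_nonneg w]

theorem stmt14 (u v : ℚ → (H →L[ℂ] H))
    (hu : ∀ x, IsOrthProj (u x)) (hv : ∀ x, IsOrthProj (v x))
    (humono : ∀ x y : ℚ, x ≤ y → LinearMap.range (u x : H →ₗ[ℂ] H) ≤ LinearMap.range (u y : H →ₗ[ℂ] H))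
    (hvmono : ∀ x y : ℚ, x ≤ y → LinearMap.range (v x : H →ₗ[ℂ] H) ≤ LinearMap.range (v y : H →ₗ[ℂ] H))
    (hud : Dense (⋃ x : ℚ, (LinearMap.range (u x : H →ₗ[ℂ] H) : Set H)))
    (hvd : Dense (⋃ x : ℚ, (LinearMap.range (v x : H →ₗ[ℂ] H) : Set H)))
    (ψ : H) :
    (∀ x y : ℚ, (u x * v y - v y * u x) ψ = 0) ↔
      (∀ x y z : ℚ, (u x * v y - v y * u x) (u z ψ) = 0 ∧
        (u x * v y - v y * u x) (v z ψ) = 0) := by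
  constructor
  · intro h x y z
    have hc : ∀ a b : ℚ, u a (v b ψ) = v b (u a ψ) := by
      intro a b
      have := h a b
      simpa [ContinuousLinearMap.sub_apply, ContinuousLinearMap.mul_apply,
        sub_eq_zero] using this
    constructor
    · -- commutator kills u z ψ
      simp only [ContinuousLinearMap.sub_apply, ContinuousLinearMap.mul_apply, sub_eq_zero]
      rcases le_total x z with hxz | hzx
      · obtain ⟨h1, h2⟩ := orthProj_absorb (hu x) (hu z) (humono x z hxz)
        -- u z * u x = u x, u x * u z = u x
        have e2 : ∀ w, u x (u z w) = u x w := fun w => by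
          have := congrArg (fun T : H →L[ℂ] H => T w) h2
          simpa [ContinuousLinearMap.mul_apply] using this
        calc u x (v y (u z ψ)) = u x (u z (v y ψ)) := by rw [hc z y]
          _ = u x (v y ψ) := e2 _
          _ = v y (u x ψ) := hc x y
          _ = v y (u x (u z ψ)) := by rw [e2 ψ]
      · obtain ⟨h1, h2⟩ := orthProj_absorb (hu z) (hu x) (humono z x hzx)
        -- u x * u z = u z, u z * u x = u z
        have e1 : ∀ w, u x (u z w) = u z w := fun w => by
          have := congrArg (fun T : H →L[ℂ] H => T w) h1
          simpa [ContinuousLinearMap.mul_apply] using this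
        calc u x (v y (u z ψ)) = u x (u z (v y ψ)) := by rw [hc z y]
          _ = u z (v y ψ) := e1 _
          _ = v y (u z ψ) := (hc z y)
          _ = v y (u x (u z ψ)) := by rw [e1 ψ]
    · -- commutator kills v z ψ
      simp only [ContinuousLinearMap.sub_apply, ContinuousLinearMap.mul_apply, sub_eq_zero]
      rcases le_total y z with hyz | hzy
      · obtain ⟨h1, h2⟩ := orthProj_absorb (hv y) (hv z) (hvmono y z hyz)
        -- v z * v y = v y, v y * v z = v y
        have e2 : ∀ w, v y (v z w) = v y w := fun w => by
          have := congrArg (fun T : H →L[ℂ] H => T w) h2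
          simpa [ContinuousLinearMap.mul_apply] using this
        calc u x (v y (v z ψ)) = u x (v y ψ) := by rw [e2 ψ]
          _ = v y (u x ψ) := hc x y
          _ = v y (v z (u x ψ)) := by rw [e2 (u x ψ)]
          _ = v y (u x (v z ψ)) := by rw [hc x z]
      · obtain ⟨h1, h2⟩ := orthProj_absorb (hv z) (hv y) (hvmono z y hzy)
        -- v y * v z = v z
        have e1 : ∀ w, v y (v z w) = v z w := fun w => by
          have := congrArg (fun T : H →L[ℂ] H => T w) h1
          simpa [ContinuousLinearMap.mul_apply] using this
        calc u x (v y (v z ψ)) = u x (v z ψ) := by rw [e1 ψ]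
          _ = v z (u x ψ) := hc x z
          _ = v y (v z (u x ψ)) := by rw [e1 (u x ψ)]
          _ = v y (u x (v z ψ)) := by rw [hc x z]
  · intro h x y
    set C : H →L[ℂ] H := u x * v y - v y * u x with hC
    by_contra hne
    have hpos : 0 < ‖C ψ‖ := by
      simpa [norm_pos_iff] using hne
    set ε : ℝ := ‖C ψ‖ / (‖C‖ + 1) with hε
    have hCpos : (0:ℝ) < ‖C‖ + 1 := by positivity
    have hεpos : 0 < ε := by positivity
    obtain ⟨φ, hφmem, hφ⟩ := hud.exists_dist_lt ψ hεpos
    obtain ⟨z, hz⟩ := Set.mem_iUnion.mp hφmem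
    have hfix : u z φ = φ := orthProj_fix (hu z) hz
    have hdist : ‖ψ - u z ψ‖ < ε := by
      have : ψ - u z ψ = (ψ - φ) - u z (ψ - φ) := by
        rw [map_sub, hfix]; abel
      rw [this]
      calc ‖(ψ - φ) - u z (ψ - φ)‖ ≤ ‖ψ - φ‖ := orthProj_norm_sub_le (hu z) _
        _ < ε := by rwa [dist_eq_norm] at hφ
    have hCu : C (u z ψ) = 0 := (h x y z).1
    have : ‖C ψ‖ ≤ ‖C‖ * ‖ψ - u z ψ‖ := by
      have : C ψ = C (ψ - u z ψ) := by rw [map_sub, hCu, sub_zero]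
      rw [this]
      exact C.le_opNorm _
    have hle : ‖C ψ‖ ≤ ‖C‖ * ε :=
      this.trans (mul_le_mul_of_nonneg_left hdist.le (norm_nonneg C))
    have hd : ε * (‖C‖ + 1) = ‖C ψ‖ := div_mul_cancel₀ _ (ne_of_gt hCpos)
    nlinarith [hεpos, hle, hd]
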